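/- arXiv:2601.10815 — 2 statements merged into one kernel-verified Lean document; each statement's English description precedes it below -/
import Mathlib

section
/- If a finite simple graph G is a q-manifold, then its Barycentric refinement (the finite simple graph whose vertices are the nonempty cliques of G, with two cliques adjacent if and only if one is strictly contained in the other) is also a q-manifold. -/
universe u

/-- The unit sphere of a vertex: the subgraph induced on the neighbors of `v`. -/
def SimpleGraph.unitSphere {V : Type u} (G : SimpleGraph V) (v : V) :
    SimpleGraph {u : V // G.Adj v u} :=
  SimpleGraph.induce {u : V | G.Adj v u} G

/-- The graph obtained by deleting the vertex `v`. -/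
def SimpleGraph.deleteVert {V : Type u} (G : SimpleGraph V) (v : V) :
    SimpleGraph {u : V // u ≠ v} :=
  SimpleGraph.induce {u : V | u ≠ v} G

/-- Inductive notion of contractibility for graphs: the one-vertex graph is
contractible, and `G` is contractible if for some vertex `v` both the unit sphere
`S(v)` and the deletion `G ∖ v` are contractible. -/
inductive GraphContractible : ∀ {V : Type u}, SimpleGraph V → Prop
  | single {V : Type u} (G : SimpleGraph V) (h1 : Nonempty V) (h2 : Subsingleton V) :
      GraphContractible G
  | step {V : Type u} (G : SimpleGraph V) (v : V)
      (hS : GraphContractible (G.unitSphere v))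
      (hD : GraphContractible (G.deleteVert v)) : GraphContractible G

/-- Inductive notion of a `q`-sphere: the empty graph is the `(-1)`-sphere, and for
`q ≥ 0` a graph is a `q`-sphere if every unit sphere is a `(q-1)`-sphere and deleting
some vertex leaves a contractible graph. -/
inductive GraphSphere : ℤ → ∀ {V : Type u}, SimpleGraph V → Prop
  | empty {V : Type u} (G : SimpleGraph V) (h : IsEmpty V) : GraphSphere (-1) G
  | succ {V : Type u} (G : SimpleGraph V) (q : ℤ) (hq : 0 ≤ q)
      (hS : ∀ v : V, GraphSphere (q - 1) (G.unitSphere v))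
      (hv : ∃ v : V, GraphContractible (G.deleteVert v)) : GraphSphere q G

/-- A graph is a `q`-manifold if every unit sphere is a `(q-1)`-sphere. -/
def IsGraphManifold (q : ℤ) {V : Type u} (G : SimpleGraph V) : Prop :=
  ∀ v : V, GraphSphere (q - 1) (G.unitSphere v)

/-- The join of two graphs: keep all edges and connect every vertex of `G` to every
vertex of `H`. -/
def graphJoin {V W : Type u} (G : SimpleGraph V) (H : SimpleGraph W) :
    SimpleGraph (V ⊕ W) where
  Adj x y := match x, y with
    | Sum.inl a, Sum.inl b => G.Adj a b
    | Sum.inr a, Sum.inr b => H.Adj a b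
    | Sum.inl _, Sum.inr _ => True
    | Sum.inr _, Sum.inl _ => True
  symm := ⟨by rintro (a | a) (b | b) h <;> simp_all [SimpleGraph.adj_comm]⟩
  loopless := ⟨by rintro (a | a) h <;> first | exact SimpleGraph.irrefl _ h | exact h.ne rfl⟩

open Classical in
/-- `f_k(G)`: the number of cliques of `G` with exactly `k+1` vertices. -/
noncomputable def graphFVec {V : Type u} [Fintype V] (G : SimpleGraph V) (k : ℕ) : ℕ :=
  (Finset.univ.filter fun x : Finset V => x.card = k + 1 ∧ G.IsClique (↑x : Set V)).card

/-- The Euler characteristic `χ(G) = Σ_k (-1)^k f_k(G)`. -/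
noncomputable def graphEulerChar {V : Type u} [Fintype V] (G : SimpleGraph V) : ℤ :=
  ∑ k ∈ Finset.range (Fintype.card V + 1), (-1 : ℤ) ^ k * graphFVec G k

open Classical in
/-- The curvature of a vertex: `K(v) = Σ_{x ∋ v} (-1)^(|x|-1)/|x|`, summing over the
cliques of `G` containing `v`. -/
noncomputable def graphCurvature {V : Type u} [Fintype V] (G : SimpleGraph V) (v : V) : ℚ :=
  ∑ x ∈ Finset.univ.filter
      (fun x : Finset V => x.Nonempty ∧ G.IsClique (↑x : Set V) ∧ v ∈ x),
    (-1 : ℚ) ^ (x.card - 1) / (x.card : ℚ)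

section Infra
open SimpleGraph

variable {V W : Type} {G : SimpleGraph V} {H : SimpleGraph W}

private def mkGIso (e : V ≃ W) (h : ∀ a b : V, H.Adj (e a) (e b) ↔ G.Adj a b) : G ≃g H :=
  { toEquiv := e, map_rel_iff' := fun {a b} => h a b }

def sphereIso (e : G ≃g H) (v : V) : G.unitSphere v ≃g H.unitSphere (e v) :=
  mkGIso (e.toEquiv.subtypeEquiv fun u => by
    constructor
    · intro h; exact e.map_adj_iff.mpr h
    · intro h; exact e.map_adj_iff.mp h)
    (fun a b => e.map_adj_iff)

def deleteIso (e : G ≃g H) (v : V) : G.deleteVert v ≃g H.deleteVert (e v) :=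
  mkGIso (e.toEquiv.subtypeEquiv fun u => by simp)
    (fun a b => e.map_adj_iff)

lemma contractible_iso : ∀ {V W : Type} {G : SimpleGraph V} {H : SimpleGraph W},
    (G ≃g H) → GraphContractible G → GraphContractible H := by
  intro V W G H e h
  induction h generalizing W with
  | single G h1 h2 =>
    exact .single H (Nonempty.map e h1) (e.toEquiv.symm.subsingleton)
  | step G v hS hD ihS ihD =>
    exact .step H (e v) (ihS (sphereIso e v)) (ihD (deleteIso e v))

lemma sphere_iso : ∀ {q : ℤ} {V W : Type} {G : SimpleGraph V} {H : SimpleGraph W},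
    (G ≃g H) → GraphSphere q G → GraphSphere q H := by
  intro q V W G H e h
  induction h generalizing W with
  | empty G hemp => exact .empty H (Function.isEmpty e.toEquiv.symm)
  | succ G q hq hS hv ih =>
    refine .succ H q hq (fun w => ?_) ?_
    · have := ih (e.symm w) (sphereIso e (e.symm w))
      rwa [e.apply_symm_apply] at this
    · obtain ⟨v, hv⟩ := hv
      exact ⟨e v, contractible_iso (deleteIso e v) hv⟩

end Infra
section Inc
open SimpleGraph

variable {V W : Type}

/-- Graph on finsets satisfying `P`, adjacency = strict inclusion either way. -/
def incGraph (P : Finset V → Prop) : SimpleGraph {z : Finset V // P z} where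
  Adj x y := x.1 ⊂ y.1 ∨ y.1 ⊂ x.1
  symm := ⟨fun x y (h : _ ∨ _) => h.symm⟩
  loopless := ⟨fun x (h : _ ∨ _) => by cases h <;> exact ssubset_irrefl _ ‹_›⟩

lemma incGraph_adj {P : Finset V → Prop} (x y : {z : Finset V // P z}) :
    (incGraph P).Adj x y ↔ (x.1 ⊂ y.1 ∨ y.1 ⊂ x.1) := Iff.rfl

def incIso {P Q : Finset V → Prop} (h : ∀ z, P z ↔ Q z) : incGraph P ≃g incGraph Q :=
  { toEquiv := Equiv.subtypeEquivRight h, map_rel_iff' := Iff.rfl }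

def incIsoOfEquiv {P : Finset V → Prop} {Q : Finset W → Prop}
    (e : {z : Finset V // P z} ≃ {w : Finset W // Q w})
    (h : ∀ a b, (e a).1 ⊂ (e b).1 ↔ a.1 ⊂ b.1) : incGraph P ≃g incGraph Q :=
  { toEquiv := e, map_rel_iff' := fun {a b} => or_congr (h a b) (h b a) }

/-- unit sphere of `incGraph` splits as a join of lower part and upper part. -/
noncomputable def incSphereIso (P : Finset V → Prop) (x : {z : Finset V // P z}) :
    (incGraph P).unitSphere x ≃g
      graphJoin (incGraph fun z => P z ∧ z ⊂ x.1) (incGraph fun z => P z ∧ x.1 ⊂ z) := by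
  classical
  refine { toEquiv := ?_, map_rel_iff' := ?_ }
  · refine
      { toFun := fun y => if h : y.1.1 ⊂ x.1 then Sum.inl ⟨y.1.1, y.1.2, h⟩
          else Sum.inr ⟨y.1.1, y.1.2, y.2.resolve_right h⟩
        invFun := fun y => match y with
          | Sum.inl z => ⟨⟨z.1, z.2.1⟩, Or.inr z.2.2⟩
          | Sum.inr z => ⟨⟨z.1, z.2.1⟩, Or.inl z.2.2⟩
        left_inv := ?_, right_inv := ?_ }
    · rintro ⟨⟨z, hz⟩, hadj⟩
      by_cases h : z ⊂ x.1 <;> simp [h]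
    · rintro (⟨z, hz, h⟩ | ⟨z, hz, h⟩)
      · simp [h]
      · have hn : ¬ z ⊂ x.1 := fun h' => ssubset_asymm h h'
        simp [hn]
  · rintro ⟨⟨a, ha⟩, hadja⟩ ⟨⟨b, hb⟩, hadjb⟩
    by_cases h1 : a ⊂ x.1 <;> by_cases h2 : b ⊂ x.1 <;>
      simp only [Equiv.coe_fn_mk, h1, h2, dif_pos, dif_neg, not_false_iff]
    · rfl
    · -- a below, b above
      have hab : a ⊂ b := h1.trans (hadjb.resolve_right h2)
      exact iff_of_true trivial (Or.inl hab)
    · have hba : b ⊂ a := h2.trans (hadja.resolve_right h1)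
      exact iff_of_true trivial (Or.inr hba)
    · rfl

def incDeleteIso (P : Finset V → Prop) (x : {z : Finset V // P z}) :
    (incGraph P).deleteVert x ≃g incGraph (fun z => P z ∧ z ≠ x.1) :=
  { toEquiv :=
      { toFun := fun y => ⟨y.1.1, y.1.2, fun h => y.2 (Subtype.ext h)⟩
        invFun := fun z => ⟨⟨z.1, z.2.1⟩, fun h => z.2.2 (congrArg Subtype.val h)⟩
        left_inv := fun y => rfl
        right_inv := fun z => rfl }
    map_rel_iff' := Iff.rfl }

end Inc
section Join
open SimpleGraph

variable {V W : Type} (G : SimpleGraph V) (H : SimpleGraph W)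

lemma natcard_lt {V : Type} [Finite V] {p : V → Prop} {x : V} (hx : ¬ p x) :
    Nat.card {u // p u} < Nat.card V := by
  classical
  have : Fintype V := Fintype.ofFinite V
  simp only [Nat.card_eq_fintype_card]
  exact Fintype.card_subtype_lt hx

def joinSphereInl (v : V) :
    (graphJoin G H).unitSphere (Sum.inl v) ≃g graphJoin (G.unitSphere v) H :=
  { toEquiv :=
      { toFun := fun x => match x with
          | ⟨Sum.inl a, h⟩ => Sum.inl ⟨a, h⟩
          | ⟨Sum.inr b, _⟩ => Sum.inr b
        invFun := fun y => match y with
          | Sum.inl a => ⟨Sum.inl a.1, a.2⟩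
          | Sum.inr b => ⟨Sum.inr b, trivial⟩
        left_inv := by rintro ⟨(a | b), h⟩ <;> rfl
        right_inv := by rintro (a | b) <;> rfl }
    map_rel_iff' := by rintro ⟨(a | b), ha⟩ ⟨(a' | b'), hb⟩ <;> exact Iff.rfl }

def joinSphereInr (w : W) :
    (graphJoin G H).unitSphere (Sum.inr w) ≃g graphJoin G (H.unitSphere w) :=
  { toEquiv :=
      { toFun := fun x => match x with
          | ⟨Sum.inl a, _⟩ => Sum.inl a
          | ⟨Sum.inr b, h⟩ => Sum.inr ⟨b, h⟩
        invFun := fun y => match y with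
          | Sum.inl a => ⟨Sum.inl a, trivial⟩
          | Sum.inr b => ⟨Sum.inr b.1, b.2⟩
        left_inv := by rintro ⟨(a | b), h⟩ <;> rfl
        right_inv := by rintro (a | b) <;> rfl }
    map_rel_iff' := by rintro ⟨(a | b), ha⟩ ⟨(a' | b'), hb⟩ <;> exact Iff.rfl }

def joinDeleteInl (v : V) :
    (graphJoin G H).deleteVert (Sum.inl v) ≃g graphJoin (G.deleteVert v) H :=
  { toEquiv :=
      { toFun := fun x => match x with
          | ⟨Sum.inl a, h⟩ => Sum.inl ⟨a, fun e => h (congrArg Sum.inl e)⟩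
          | ⟨Sum.inr b, _⟩ => Sum.inr b
        invFun := fun y => match y with
          | Sum.inl a => ⟨Sum.inl a.1, fun e => a.2 (Sum.inl.inj e)⟩
          | Sum.inr b => ⟨Sum.inr b, fun e => nomatch e⟩
        left_inv := by rintro ⟨(a | b), h⟩ <;> rfl
        right_inv := by rintro (a | b) <;> rfl }
    map_rel_iff' := by rintro ⟨(a | b), ha⟩ ⟨(a' | b'), hb⟩ <;> exact Iff.rfl }

def joinDeleteInr (w : W) :
    (graphJoin G H).deleteVert (Sum.inr w) ≃g graphJoin G (H.deleteVert w) :=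
  { toEquiv :=
      { toFun := fun x => match x with
          | ⟨Sum.inl a, _⟩ => Sum.inl a
          | ⟨Sum.inr b, h⟩ => Sum.inr ⟨b, fun e => h (congrArg Sum.inr e)⟩
        invFun := fun y => match y with
          | Sum.inl a => ⟨Sum.inl a, fun e => nomatch e⟩
          | Sum.inr b => ⟨Sum.inr b.1, fun e => b.2 (Sum.inr.inj e)⟩
        left_inv := by rintro ⟨(a | b), h⟩ <;> rfl
        right_inv := by rintro (a | b) <;> rfl }
    map_rel_iff' := by rintro ⟨(a | b), ha⟩ ⟨(a' | b'), hb⟩ <;> exact Iff.rfl }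

def joinEmptyRight [IsEmpty W] : graphJoin G H ≃g G :=
  { toEquiv := Equiv.sumEmpty V W
    map_rel_iff' := by rintro (a | b) (a' | b') <;> first | exact Iff.rfl | exact isEmptyElim ‹W› }

def joinEmptyLeft [IsEmpty V] : graphJoin G H ≃g H :=
  { toEquiv := Equiv.emptySum V W
    map_rel_iff' := by rintro (a | b) (a' | b') <;> first | exact Iff.rfl | exact isEmptyElim ‹V› }

lemma cone_contr : ∀ (n : ℕ) {V W : Type} [Finite W]
    (G : SimpleGraph V) (H : SimpleGraph W) (_ : Nonempty V) (_ : Subsingleton V),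
    Nat.card W ≤ n → GraphContractible (graphJoin G H) := by
  intro n
  induction n with
  | zero =>
    intro V W _ G H h1 h2 hn
    have : IsEmpty W := by
      rcases isEmpty_or_nonempty W with h | h
      · exact h
      · exact absurd hn (by simpa using Nat.card_pos.ne')
    refine .single _ ⟨Sum.inl h1.some⟩ ?_
    constructor
    rintro (a | b) (a' | b')
    · exact congrArg Sum.inl (Subsingleton.elim a a')
    · exact isEmptyElim b'
    · exact isEmptyElim b
    · exact isEmptyElim b
  | succ n ih =>
    intro V W _ G H h1 h2 hn
    rcases isEmpty_or_nonempty W with h | h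
    · refine .single _ ⟨Sum.inl h1.some⟩ ?_
      constructor
      rintro (a | b) (a' | b')
      · exact congrArg Sum.inl (Subsingleton.elim a a')
      · exact isEmptyElim b'
      · exact isEmptyElim b
      · exact isEmptyElim b
    · obtain ⟨w⟩ := h
      refine .step _ (Sum.inr w) ?_ ?_
      · refine contractible_iso (joinSphereInr G H w).symm (ih G (H.unitSphere w) h1 h2 ?_)
        have h2 : Nat.card {u // H.Adj w u} < Nat.card W := natcard_lt H.irrefl
        omega
      · refine contractible_iso (joinDeleteInr G H w).symm (ih G (H.deleteVert w) h1 h2 ?_)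
        have h2 : Nat.card {u // u ≠ w} < Nat.card W := natcard_lt (x := w) (by simp)
        omega

lemma join_contractible_left {V W : Type} [Finite W] {G : SimpleGraph V} (H : SimpleGraph W)
    (h : GraphContractible G) : GraphContractible (graphJoin G H) := by
  induction h with
  | single G h1 h2 => exact cone_contr (Nat.card W) G H h1 h2 le_rfl
  | step G v hS hD ihS ihD =>
    exact .step _ (Sum.inl v) (contractible_iso (joinSphereInl G H v).symm ihS)
      (contractible_iso (joinDeleteInl G H v).symm ihD)

lemma join_sphere : ∀ (n : ℕ) {V W : Type} [Finite V] [Finite W]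
    (G : SimpleGraph V) (H : SimpleGraph W) (p q : ℤ),
    Nat.card V + Nat.card W ≤ n → GraphSphere p G → GraphSphere q H →
    GraphSphere (p + q + 1) (graphJoin G H) := by
  intro n
  induction n with
  | zero =>
    intro V W _ _ G H p q hn hG hH
    cases hG with
    | empty _ hemp =>
      cases hH with
      | empty _ hemp' =>
        have : (-1 : ℤ) + -1 + 1 = -1 := by ring
        rw [this]
        exact .empty _ (by infer_instance)
      | succ _ q hq hS hv =>
        obtain ⟨w, -⟩ := hv
        haveI : Nonempty W := ⟨w⟩
        have := Nat.card_pos (α := W)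
        omega
    | succ _ p hq hS hv =>
      obtain ⟨v, -⟩ := hv
      haveI : Nonempty V := ⟨v⟩
      have := Nat.card_pos (α := V)
      omega
  | succ n ih =>
    intro V W _ _ G H p q hn hG hH
    cases hG with
    | empty _ hemp =>
      have h : (-1 : ℤ) + q + 1 = q := by ring
      rw [h]
      exact sphere_iso (joinEmptyLeft G H).symm hH
    | succ _ p hp hSG hvG =>
      cases hH with
      | empty _ hemp =>
        have h : p + (-1) + 1 = p := by ring
        rw [h]
        exact sphere_iso (joinEmptyRight G H).symm (.succ _ p hp hSG hvG)
      | succ _ q hq hSH hvH =>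
        refine .succ _ _ (by omega) ?_ ?_
        · rintro (a | b)
          · have hcard : Nat.card {u // G.Adj a u} + Nat.card W ≤ n := by
              have h2 : Nat.card {u // G.Adj a u} < Nat.card V := natcard_lt (G.irrefl)
              omega
            have := ih (G.unitSphere a) H (p - 1) q hcard (hSG a) (.succ _ q hq hSH hvH)
            have harith : p - 1 + q + 1 = p + q + 1 - 1 := by ring
            rw [harith] at this
            exact sphere_iso (joinSphereInl G H a).symm this
          · have hcard : Nat.card V + Nat.card {u // H.Adj b u} ≤ n := by
              have h2 : Nat.card {u // H.Adj b u} < Nat.card W := natcard_lt (H.irrefl)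
              omega
            have := ih G (H.unitSphere b) p (q - 1) hcard (.succ _ p hp hSG hvG) (hSH b)
            have harith : p + (q - 1) + 1 = p + q + 1 - 1 := by ring
            rw [harith] at this
            exact sphere_iso (joinSphereInr G H b).symm this
        · obtain ⟨v, hv⟩ := hvG
          exact ⟨Sum.inl v,
            contractible_iso (joinDeleteInl G H v).symm (join_contractible_left H hv)⟩

end Join
section Cone
open SimpleGraph

lemma coneVertex {V : Type} [Finite V] (G : SimpleGraph V) (v : V)
    (h : ∀ u, u ≠ v → G.Adj v u) : GraphContractible G := by
  classical
  have e : graphJoin (⊥ : SimpleGraph {u : V // u = v}) (G.deleteVert v) ≃g G :=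
    { toEquiv := Equiv.sumCompl (fun u => u = v)
      map_rel_iff' := by
        rintro (⟨a, rfl⟩ | ⟨a, ha⟩) (⟨b, hb⟩ | ⟨b, hb⟩)
        · subst hb; exact iff_of_false (G.irrefl) id
        · exact iff_of_true (h b hb) trivial
        · subst hb; exact iff_of_true ((h a ha).symm) trivial
        · exact Iff.rfl }
  haveI : Nonempty {u : V // u = v} := ⟨⟨v, rfl⟩⟩
  haveI : Subsingleton {u : V // u = v} := ⟨by rintro ⟨a, rfl⟩ ⟨b, rfl⟩; rfl⟩
  exact contractible_iso e
    (cone_contr (Nat.card {u : V // u ≠ v}) _ _ ‹_› ‹_› le_rfl)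

end Cone

section FinsetHelpers

variable {V : Type} [DecidableEq V]

lemma ssubset_iff_ne {s t : Finset V} (h : s ⊆ t) : s ⊂ t ↔ s ≠ t := by
  constructor
  · exact fun h' => h'.ne
  · exact fun h' => lt_of_le_of_ne h h'

lemma sdiff_ssubset_sdiff {x s t : Finset V} (hs : x ⊆ s) (ht : x ⊆ t) :
    s \ x ⊂ t \ x ↔ s ⊂ t := by
  constructor
  · intro h
    have hsub : s ⊆ t := by
      intro u hu
      by_cases hux : u ∈ x
      · exact ht hux
      · have : u ∈ s \ x := Finset.mem_sdiff.mpr ⟨hu, hux⟩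
        have := h.1 this
        exact (Finset.mem_sdiff.mp this).1
    refine (ssubset_iff_ne hsub).mpr (fun he => ?_)
    subst he
    exact h.ne rfl
  · intro h
    have hsub : s \ x ⊆ t \ x := Finset.sdiff_subset_sdiff h.1 le_rfl
    refine (ssubset_iff_ne hsub).mpr (fun he => ?_)
    have : s = t := by
      have h1 : s = x ∪ (s \ x) := (Finset.union_sdiff_of_subset hs).symm
      have h2 : t = x ∪ (t \ x) := (Finset.union_sdiff_of_subset ht).symm
      rw [h1, h2, he]
    exact h.ne this
end FinsetHelpers
section DLemma
open SimpleGraph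

variable {V : Type}

lemma two_le_card_of_mem_ne {a : V} {w : Finset V} (haw : a ∈ w) (hne : w ≠ {a}) :
    2 ≤ w.card := by
  classical
  have h1 : {a} ⊂ w := by
    refine (ssubset_iff_ne (Finset.singleton_subset_iff.mpr haw)).mpr ?_
    exact fun h => hne h.symm
  have := Finset.card_lt_card h1
  simp at this; omega

lemma Dpeel [Finite V] (z : Finset V) (a : V) (ha : a ∈ z) (h2 : 2 ≤ z.card) :
    ∀ (m : ℕ) (R : Finset (Finset V)), R.card = m →
    (∀ w ∈ R, a ∈ w ∧ w ⊂ z ∧ 2 ≤ w.card) →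
    (∀ w ∈ R, ∀ w', w ⊆ w' → w' ⊂ z → w' ∈ R) →
    GraphContractible
      (incGraph fun w : Finset V => w.Nonempty ∧ w ⊂ z ∧ w ≠ {a} ∧ (a ∈ w → w ∈ R)) := by
  classical
  letI : Fintype V := Fintype.ofFinite V
  intro m
  induction m with
  | zero =>
    intro R hR hprops hclosed
    have hRempty : R = ∅ := Finset.card_eq_zero.mp hR
    subst hRempty
    refine contractible_iso (incIso (fun w => ?_)).symm
      (coneVertex (incGraph fun w : Finset V => w.Nonempty ∧ w ⊆ z.erase a)
        ⟨z.erase a, ?_, le_rfl⟩ ?_)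
    · constructor
      · rintro ⟨hne, hsub, hnea, hnmem⟩
        have haw : a ∉ w := fun h => absurd (hnmem h) (by simp)
        exact ⟨hne, Finset.subset_erase.mpr ⟨hsub.1, haw⟩⟩
      · rintro ⟨hne, hsub⟩
        have haw : a ∉ w := fun h => (Finset.notMem_erase a z) (hsub h)
        refine ⟨hne, ?_, ?_, fun h => absurd h haw⟩
        · refine (ssubset_iff_ne ((hsub).trans (Finset.erase_subset a z))).mpr ?_
          rintro rfl
          exact haw ha
        · rintro rfl
          exact haw (Finset.mem_singleton_self a)
    · have : 1 ≤ (z.erase a).card := by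
        rw [Finset.card_erase_of_mem ha]; omega
      exact Finset.card_pos.mp (by omega)
    · rintro ⟨u, hu1, hu2⟩ hne
      have : u ≠ z.erase a := fun h => hne (Subtype.ext h)
      exact Or.inr ((ssubset_iff_ne hu2).mpr this)
  | succ m ih =>
    intro R hR hprops hclosed
    have hRne : R.Nonempty := Finset.card_pos.mp (by omega)
    obtain ⟨w₀, hw₀R, hw₀min⟩ := R.exists_min_image Finset.card hRne
    obtain ⟨haw₀, hw₀z, hw₀2⟩ := hprops w₀ hw₀R
    have hw₀ne : w₀.Nonempty := Finset.card_pos.mp (by omega)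
    have hw₀na : w₀ ≠ {a} := by
      intro h; rw [h] at hw₀2; simp at hw₀2
    refine GraphContractible.step _ (⟨w₀, hw₀ne, hw₀z, hw₀na, fun _ => hw₀R⟩ :
      {w : Finset V // w.Nonempty ∧ w ⊂ z ∧ w ≠ {a} ∧ (a ∈ w → w ∈ R)}) ?_ ?_
    · -- unit sphere has cone point w₀.erase a
      have hyprop : (w₀.erase a).Nonempty ∧ w₀.erase a ⊂ z ∧ w₀.erase a ≠ {a} ∧
          (a ∈ w₀.erase a → w₀.erase a ∈ R) := by
        refine ⟨?_, ?_, ?_, fun h => absurd h (Finset.notMem_erase a w₀)⟩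
        · have : 1 ≤ (w₀.erase a).card := by
            rw [Finset.card_erase_of_mem haw₀]; omega
          exact Finset.card_pos.mp (by omega)
        · exact lt_of_le_of_lt (Finset.erase_subset a w₀) hw₀z
        · intro h
          exact (Finset.notMem_erase a w₀) (h ▸ Finset.mem_singleton_self a)
      refine coneVertex _ ⟨⟨w₀.erase a, hyprop⟩, Or.inr (Finset.erase_ssubset haw₀)⟩ ?_
      rintro ⟨⟨u, hu⟩, hadj⟩ hne
      rcases hadj with h | h
      · -- w₀ ⊂ u
        exact Or.inl (lt_of_le_of_lt (Finset.erase_subset a w₀) h)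
      · -- u ⊂ w₀
        have hau : a ∉ u := by
          intro hau
          have huR := hu.2.2.2 hau
          have h1 : w₀.card ≤ u.card := hw₀min u huR
          have h2 : u.card < w₀.card := Finset.card_lt_card h
          omega
        have husub : u ⊆ w₀.erase a := Finset.subset_erase.mpr ⟨h.1, hau⟩
        have hune : u ≠ w₀.erase a := by
          intro h'
          exact hne (by apply Subtype.ext; apply Subtype.ext; exact h')
        exact Or.inr ((ssubset_iff_ne husub).mpr hune)
    · refine contractible_iso (incDeleteIso _ _).symm ?_
      refine contractible_iso (incIso (fun w => ?_)).symm
        (ih (R.erase w₀) (by rw [Finset.card_erase_of_mem hw₀R, hR]; rfl)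
          (fun w hw => hprops w (Finset.mem_of_mem_erase hw)) ?_)
      · -- pred iff
        constructor
        · rintro ⟨⟨hne, hsub, hna, hmem⟩, hww₀⟩
          refine ⟨hne, hsub, hna, fun h => Finset.mem_erase.mpr ⟨hww₀, hmem h⟩⟩
        · rintro ⟨hne, hsub, hna, hmem⟩
          refine ⟨⟨hne, hsub, hna, fun hcontra => Finset.mem_of_mem_erase (hmem hcontra)⟩, ?_⟩
          intro heq
          have : w ∈ R.erase w₀ := hmem (by rw [heq]; exact haw₀)
          exact (Finset.ne_of_mem_erase this) heq
      · intro w hw w' hsub hz'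
        have hwR := Finset.mem_of_mem_erase hw
        have hw' := hclosed w hwR w' hsub hz'
        refine Finset.mem_erase.mpr ⟨?_, hw'⟩
        intro heq
        subst heq
        have h1 := hw₀min w hwR
        have h2 := Finset.card_le_card hsub
        have : w = w' := Finset.eq_of_subset_of_card_le hsub (by omega)
        exact (Finset.ne_of_mem_erase hw) this

lemma D_contr [Finite V] (z : Finset V) (a : V) (ha : a ∈ z) (h2 : 2 ≤ z.card) :
    GraphContractible (incGraph fun w : Finset V => w.Nonempty ∧ w ⊂ z ∧ w ≠ {a}) := by
  classical
  letI : Fintype V := Fintype.ofFinite V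
  set R : Finset (Finset V) := z.powerset.filter (fun w => a ∈ w ∧ w ⊂ z ∧ 2 ≤ w.card) with hRdef
  have hmem : ∀ w : Finset V, w ∈ R ↔ a ∈ w ∧ w ⊂ z ∧ 2 ≤ w.card := by
    intro w
    simp only [hRdef, Finset.mem_filter, Finset.mem_powerset, and_iff_right_iff_imp]
    exact fun h => h.2.1.1
  refine contractible_iso (incIso (fun w => ?_)) (Dpeel z a ha h2 R.card R rfl
    (fun w hw => (hmem w).mp hw) ?_)
  · constructor
    · rintro ⟨hne, hsub, hna, _⟩
      exact ⟨hne, hsub, hna⟩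
    · rintro ⟨hne, hsub, hna⟩
      refine ⟨hne, hsub, hna, fun haw => (hmem w).mpr ⟨haw, hsub, two_le_card_of_mem_ne haw hna⟩⟩
  · intro w hw w' hsub hz'
    obtain ⟨h1, h2', h3⟩ := (hmem w).mp hw
    exact (hmem w').mpr ⟨hsub h1, hz', le_trans h3 (Finset.card_le_card hsub)⟩

end DLemma
section BdSphere
open SimpleGraph

lemma bd_sphere {V : Type} [Finite V] :
    ∀ (n : ℕ) (z : Finset V), z.card = n → 1 ≤ n →
    GraphSphere ((n : ℤ) - 2) (incGraph fun y : Finset V => y.Nonempty ∧ y ⊂ z) := by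
  classical
  letI : Fintype V := Fintype.ofFinite V
  intro n
  induction n using Nat.strong_induction_on with
  | _ n ih =>
    intro z hz h1
    rcases eq_or_lt_of_le h1 with h1' | h2
    · -- n = 1 : empty graph
      have hempty : IsEmpty {y : Finset V // y.Nonempty ∧ y ⊂ z} := by
        constructor
        rintro ⟨y, hy1, hy2⟩
        have := Finset.card_lt_card hy2
        have := Finset.card_pos.mpr hy1
        omega
      have : ((n : ℤ) - 2) = -1 := by omega
      rw [this]
      exact .empty _ hempty
    · -- n ≥ 2
      refine .succ _ _ (by omega) ?_ ?_
      · rintro ⟨y, hyne, hysub⟩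
        refine sphere_iso (incSphereIso _ ⟨y, hyne, hysub⟩).symm ?_
        have hlow : GraphSphere ((y.card : ℤ) - 2)
            (incGraph fun w : Finset V => (w.Nonempty ∧ w ⊂ z) ∧ w ⊂ y) := by
          refine sphere_iso (incIso (fun w => ?_)) (ih y.card ?_ y rfl ?_)
          · constructor
            · rintro ⟨hne, hsub⟩
              exact ⟨⟨hne, hsub.trans hysub⟩, hsub⟩
            · rintro ⟨⟨hne, _⟩, hsub⟩
              exact ⟨hne, hsub⟩
          · have := Finset.card_lt_card hysub
            omega
          · exact Finset.card_pos.mpr hyne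
        have hup : GraphSphere (((z \ y).card : ℤ) - 2)
            (incGraph fun w : Finset V => (w.Nonempty ∧ w ⊂ z) ∧ y ⊂ w) := by
          refine sphere_iso (incIsoOfEquiv (Q := fun u : Finset V => u.Nonempty ∧ u ⊂ z \ y)
            ?_ ?_).symm (ih (z \ y).card ?_ (z \ y) rfl ?_)
          · refine
              { toFun := fun w => ⟨w.1 \ y, ?_, ?_⟩
                invFun := fun u => ⟨u.1 ∪ y, ⟨?_, ?_⟩, ?_⟩
                left_inv := ?_, right_inv := ?_ }
            · -- nonempty
              exact Finset.sdiff_nonempty.mpr w.2.2.not_subset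
            · -- w \ y ⊂ z \ y
              exact (sdiff_ssubset_sdiff w.2.2.subset hysub.subset).mpr w.2.1.2
            · exact Finset.Nonempty.inl u.2.1
            · -- u ∪ y ⊂ z
              have husub : u.1 ⊆ z \ y := u.2.2.subset
              have h1 : u.1 ∪ y ⊆ z := by
                refine Finset.union_subset (husub.trans (Finset.sdiff_subset)) hysub.subset
              refine (ssubset_iff_ne h1).mpr ?_
              intro heq
              have : u.1 = z \ y := by
                have hdisj : Disjoint u.1 y :=
                  Finset.disjoint_of_subset_left husub (Finset.sdiff_disjoint)
                have : (u.1 ∪ y) \ y = u.1 := by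
                  rw [Finset.union_sdiff_right, Finset.sdiff_eq_self_of_disjoint hdisj]
                rw [← this, heq]
              exact u.2.2.ne this
            · -- y ⊂ u ∪ y
              refine (ssubset_iff_ne (Finset.subset_union_right)).mpr ?_
              intro heq
              obtain ⟨c, hc⟩ := u.2.1
              have hcy : c ∈ y := by rw [heq]; exact Finset.mem_union_left y hc
              have := u.2.2.subset hc
              rw [Finset.mem_sdiff] at this
              exact this.2 hcy
            · rintro ⟨w, ⟨hne, hsub⟩, hyw⟩
              apply Subtype.ext
              exact Finset.sdiff_union_of_subset hyw.subset
            · rintro ⟨u, hne, hsub⟩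
              apply Subtype.ext
              have hdisj : Disjoint u y :=
                Finset.disjoint_of_subset_left hsub.subset (Finset.sdiff_disjoint)
              show (u ∪ y) \ y = u
              rw [Finset.union_sdiff_right, Finset.sdiff_eq_self_of_disjoint hdisj]
          · rintro ⟨w, ⟨hne, hsub⟩, hyw⟩ ⟨w', ⟨hne', hsub'⟩, hyw'⟩
            exact sdiff_ssubset_sdiff hyw.subset hyw'.subset
          · have h3 : y.card < z.card := Finset.card_lt_card hysub
            have h4 : (z \ y).card = z.card - y.card := Finset.card_sdiff_of_subset hysub.subset
            have h5 : 1 ≤ y.card := Finset.card_pos.mpr hyne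
            omega
          · have h4 : (z \ y).card = z.card - y.card := Finset.card_sdiff_of_subset hysub.subset
            have h3 : y.card < z.card := Finset.card_lt_card hysub
            omega
        have := join_sphere (Nat.card {w : Finset V // (w.Nonempty ∧ w ⊂ z) ∧ w ⊂ y} +
            Nat.card {w : Finset V // (w.Nonempty ∧ w ⊂ z) ∧ y ⊂ w}) _ _ _ _ le_rfl hlow hup
        have hdim : ((y.card : ℤ) - 2) + (((z \ y).card : ℤ) - 2) + 1 = (n : ℤ) - 2 - 1 := by
          have h4 : (z \ y).card = z.card - y.card := Finset.card_sdiff_of_subset hysub.subset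
          have h3 : y.card < z.card := Finset.card_lt_card hysub
          have h5 : 1 ≤ y.card := Finset.card_pos.mpr hyne
          omega
        rwa [hdim] at this
      · obtain ⟨a, haz⟩ := Finset.card_pos.mp (by omega : 0 < z.card)
        refine ⟨⟨{a}, Finset.singleton_nonempty a, ?_⟩, ?_⟩
        · refine (ssubset_iff_ne (Finset.singleton_subset_iff.mpr haz)).mpr ?_
          intro heq
          rw [← heq] at hz
          simp at hz
          omega
        · refine contractible_iso (incDeleteIso _ _).symm ?_
          refine contractible_iso (incIso (fun w => ?_)) (D_contr z a haz (by omega))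
          constructor
          · rintro ⟨hne, hsub, hna⟩
            exact ⟨⟨hne, hsub⟩, hna⟩
          · rintro ⟨⟨hne, hsub⟩, hna⟩
            exact ⟨hne, hsub, hna⟩
end BdSphere
section Transfer
open SimpleGraph

variable {V : Type}

/-- Barycentric refinement as an `incGraph`. -/
abbrev refG (G : SimpleGraph V) : SimpleGraph {z : Finset V // z.Nonempty ∧ G.IsClique (↑z : Set V)} :=
  incGraph (fun z : Finset V => z.Nonempty ∧ G.IsClique (↑z : Set V))

lemma isClique_map_subtype {p : V → Prop} (G : SimpleGraph V) (z : Finset {u : V // p u}) :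
    G.IsClique (↑(z.map (Function.Embedding.subtype p)) : Set V) ↔
      (SimpleGraph.induce {u : V | p u} G).IsClique (↑z : Set {u : V // p u}) := by
  constructor
  · intro h a ha b hb hab
    have ha' : a.1 ∈ z.map (Function.Embedding.subtype p) := by
      simp only [Finset.mem_map, Function.Embedding.coe_subtype]
      exact ⟨a, ha, rfl⟩
    have hb' : b.1 ∈ z.map (Function.Embedding.subtype p) := by
      simp only [Finset.mem_map, Function.Embedding.coe_subtype]
      exact ⟨b, hb, rfl⟩
    exact h ha' hb' (fun h' => hab (Subtype.ext h'))
  · intro h a ha b hb hab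
    simp only [Finset.coe_map, Set.mem_image, Finset.mem_coe] at ha hb
    obtain ⟨a', ha', rfl⟩ := ha
    obtain ⟨b', hb', rfl⟩ := hb
    exact h ha' hb' (fun h' => hab (congrArg _ h'))

noncomputable def refInduceIso (G : SimpleGraph V) (p : V → Prop) :
    refG (SimpleGraph.induce {u : V | p u} G) ≃g
      incGraph (fun z : Finset V => z.Nonempty ∧ G.IsClique (↑z : Set V) ∧ ∀ u ∈ z, p u) := by
  classical
  refine incIsoOfEquiv ?_ ?_
  · refine
      { toFun := fun z => ⟨z.1.map (Function.Embedding.subtype p), ?_, ?_, ?_⟩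
        invFun := fun w => ⟨w.1.subtype p, ?_, ?_⟩
        left_inv := ?_, right_inv := ?_ }
    · exact Finset.Nonempty.map z.2.1
    · exact (isClique_map_subtype G z.1).mpr z.2.2
    · intro u hu
      simp only [Finset.mem_map, Function.Embedding.coe_subtype] at hu
      obtain ⟨a, -, rfl⟩ := hu
      exact a.2
    · obtain ⟨c, hc⟩ := w.2.1
      exact ⟨⟨c, w.2.2.2 c hc⟩, Finset.mem_subtype.mpr hc⟩
    · intro a ha b hb hab
      rw [Finset.mem_coe, Finset.mem_subtype] at ha hb
      exact w.2.2.1 ha hb (fun h => hab (Subtype.ext h))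
    · intro z
      apply Subtype.ext
      ext a
      simp only [Finset.mem_subtype, Finset.mem_map, Function.Embedding.coe_subtype]
      constructor
      · rintro ⟨b, hb, heq⟩
        rwa [show b = a from Subtype.ext heq] at hb
      · intro ha
        exact ⟨a, ha, rfl⟩
    · intro w
      apply Subtype.ext
      ext a
      simp only [Finset.mem_map, Finset.mem_subtype, Function.Embedding.coe_subtype]
      constructor
      · rintro ⟨b, hb, rfl⟩
        exact hb
      · intro ha
        exact ⟨⟨a, w.2.2.2 a ha⟩, ha, rfl⟩
  · intro a b
    exact Finset.map_ssubset_map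

end Transfer
section Link
open SimpleGraph

variable {V : Type}

/-- The link of a clique: induced graph on common neighbours of all elements of `x`. -/
abbrev linkG (G : SimpleGraph V) (x : Finset V) :
    SimpleGraph {u : V // ∀ a ∈ x, G.Adj a u} :=
  SimpleGraph.induce {u : V | ∀ a ∈ x, G.Adj a u} G

lemma sphere_isManifold {q : ℤ} {G : SimpleGraph V} (h : GraphSphere q G) :
    IsGraphManifold q G := by
  cases h with
  | empty _ hemp => exact fun v => isEmptyElim v
  | succ _ q hq hS hv => exact hS

lemma link_sphere :
    ∀ (n : ℕ) {V : Type} (G : SimpleGraph V) (q : ℤ), IsGraphManifold q G →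
    ∀ x : Finset V, G.IsClique (↑x : Set V) → x.card = n → 1 ≤ n →
    GraphSphere (q - n) (linkG G x) := by
  intro n
  induction n with
  | zero => intro _ _ _ _ _ _ _ h; omega
  | succ n ih =>
    intro V G q hG x hx hcard hn
    classical
    rcases Nat.eq_or_lt_of_le hn with h1 | h2
    · -- x = {v}
      obtain ⟨v, rfl⟩ : ∃ v, x = {v} := Finset.card_eq_one.mp (by omega)
      have e : G.unitSphere v ≃g linkG G {v} :=
        { toEquiv := Equiv.subtypeEquivRight (fun u => by simp)
          map_rel_iff' := Iff.rfl }
      have := sphere_iso e (hG v)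
      have harith : q - ((n + 1 : ℕ) : ℤ) = q - 1 := by
        have : n = 0 := by omega
        subst this; norm_num
      rwa [← harith] at this
    · -- |x| ≥ 2
      obtain ⟨v, hv⟩ : x.Nonempty := Finset.card_pos.mp (by omega)
      set x' := x.erase v with hx'def
      have hx'card : x'.card = n := by
        rw [hx'def, Finset.card_erase_of_mem hv, hcard]; omega
      have hadjv : ∀ u ∈ x', G.Adj v u := by
        intro u hu
        exact hx hv (Finset.mem_of_mem_erase hu)
          (fun h => (Finset.ne_of_mem_erase hu) h.symm)
      set H := G.unitSphere v with hHdef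
      have hHman : IsGraphManifold (q - 1) H := sphere_isManifold (hG v)
      set x'' : Finset {u : V // G.Adj v u} := x'.subtype (fun u => G.Adj v u) with hx''def
      have hx''card : x''.card = n := by
        rw [hx''def, Finset.card_subtype, Finset.filter_true_of_mem hadjv, hx'card]
      have hx''cl : H.IsClique (↑x'' : Set {u : V // G.Adj v u}) := by
        intro a ha b hb hab
        rw [Finset.mem_coe, hx''def, Finset.mem_subtype] at ha hb
        exact hx (Finset.mem_of_mem_erase ha) (Finset.mem_of_mem_erase hb)
          (fun h => hab (Subtype.ext h))
      have := ih H (q - 1) hHman x'' hx''cl hx''card (by omega)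
      have e : linkG H x'' ≃g linkG G x := by
        refine
          { toEquiv :=
              { toFun := fun u => ⟨u.1.1, ?_⟩
                invFun := fun w => ⟨⟨w.1, w.2 v hv⟩, ?_⟩
                left_inv := fun u => rfl
                right_inv := fun w => rfl }
            map_rel_iff' := Iff.rfl }
        · intro a hax
          rcases Finset.mem_insert.mp
            (show a ∈ insert v (x.erase v) by rwa [Finset.insert_erase hv]) with h | h
          · subst h; exact u.1.2
          · exact u.2 ⟨a, hx hv (Finset.mem_of_mem_erase h)
              (fun hh => (Finset.ne_of_mem_erase h) hh.symm)⟩ (Finset.mem_subtype.mpr h)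
        · intro a ha
          exact w.2 a.1 (Finset.mem_of_mem_erase (Finset.mem_subtype.mp ha))
      have hres := sphere_iso e this
      have harith : q - 1 - (n : ℤ) = q - ((n + 1 : ℕ) : ℤ) := by push_cast; ring
      rwa [harith] at hres
end Link
section Above
open SimpleGraph

variable {V : Type}

noncomputable def aboveIso (G : SimpleGraph V) (x : Finset V) (hxcl : G.IsClique (↑x : Set V)) :
    incGraph (fun z : Finset V => (z.Nonempty ∧ G.IsClique (↑z : Set V)) ∧ x ⊂ z) ≃g
      incGraph (fun w : Finset V =>
        w.Nonempty ∧ G.IsClique (↑w : Set V) ∧ ∀ u ∈ w, ∀ a ∈ x, G.Adj a u) := by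
  classical
  refine incIsoOfEquiv ?_ ?_
  · refine
      { toFun := fun z => ⟨z.1 \ x, ?_, ?_, ?_⟩
        invFun := fun w => ⟨w.1 ∪ x, ⟨?_, ?_⟩, ?_⟩
        left_inv := ?_, right_inv := ?_ }
    · exact Finset.sdiff_nonempty.mpr z.2.2.not_subset
    · refine z.2.1.2.subset ?_
      exact_mod_cast Finset.coe_subset.mpr (Finset.sdiff_subset)
    · intro u hu a ha
      rw [Finset.mem_sdiff] at hu
      exact z.2.1.2 (Finset.mem_coe.mpr (z.2.2.subset ha)) (Finset.mem_coe.mpr hu.1)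
        (fun h => hu.2 (h ▸ ha))
    · exact Finset.Nonempty.inl w.2.1
    · -- clique of w ∪ x
      intro a ha b hb hab
      rw [Finset.coe_union, Set.mem_union] at ha hb
      rcases ha with ha | ha <;> rcases hb with hb | hb
      · exact w.2.2.1 ha hb hab
      · exact (w.2.2.2 a (Finset.mem_coe.mp ha) b (Finset.mem_coe.mp hb)).symm
      · exact w.2.2.2 b (Finset.mem_coe.mp hb) a (Finset.mem_coe.mp ha)
      · exact hxcl ha hb hab
    · -- x ⊂ w ∪ x
      refine (ssubset_iff_ne (Finset.subset_union_right)).mpr ?_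
      intro heq
      obtain ⟨c, hc⟩ := w.2.1
      have hcx : c ∈ x := by rw [heq]; exact Finset.mem_union_left x hc
      exact G.irrefl (w.2.2.2 c hc c hcx)
    · rintro ⟨z, ⟨hne, hcl⟩, hxz⟩
      exact Subtype.ext (Finset.sdiff_union_of_subset hxz.subset)
    · rintro ⟨w, hne, hcl, hlink⟩
      apply Subtype.ext
      have hdisj : Disjoint w x := by
        rw [Finset.disjoint_left]
        intro c hc hcx
        exact G.irrefl (hlink c hc c hcx)
      show (w ∪ x) \ x = w
      rw [Finset.union_sdiff_right, Finset.sdiff_eq_self_of_disjoint hdisj]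
  · rintro ⟨z, ⟨hne, hcl⟩, hxz⟩ ⟨z', ⟨hne', hcl'⟩, hxz'⟩
    exact sdiff_ssubset_sdiff hxz.subset hxz'.subset
end Above
section Master
open SimpleGraph

lemma singleton_clique {V : Type} (G : SimpleGraph V) (v : V) :
    G.IsClique (↑({v} : Finset V) : Set V) := by
  intro a ha b hb hab
  simp only [Finset.coe_singleton, Set.mem_singleton_iff] at ha hb
  exact absurd (ha.trans hb.symm) hab

lemma Epeel {V : Type} [Finite V] (G : SimpleGraph V) (v : V)
    (base : GraphContractible
      (incGraph fun z : Finset V => z.Nonempty ∧ G.IsClique (↑z : Set V) ∧ v ∉ z)) :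
    ∀ (m : ℕ) (R : Finset (Finset V)), R.card = m →
    (∀ w ∈ R, v ∈ w ∧ G.IsClique (↑w : Set V) ∧ 2 ≤ w.card) →
    (∀ w ∈ R, ∀ w', w' ⊆ w → v ∈ w' → 2 ≤ w'.card → w' ∈ R) →
    GraphContractible (incGraph fun z : Finset V =>
      z.Nonempty ∧ G.IsClique (↑z : Set V) ∧ z ≠ {v} ∧ (v ∈ z → z ∈ R)) := by
  classical
  letI : Fintype V := Fintype.ofFinite V
  intro m
  induction m with
  | zero =>
    intro R hR hprops hclosed
    have hRempty : R = ∅ := Finset.card_eq_zero.mp hR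
    subst hRempty
    refine contractible_iso (incIso (fun z => ?_)).symm base
    constructor
    · rintro ⟨hne, hcl, hnv, hmem⟩
      exact ⟨hne, hcl, fun h => absurd (hmem h) (by simp)⟩
    · rintro ⟨hne, hcl, hvz⟩
      refine ⟨hne, hcl, ?_, fun h => absurd h hvz⟩
      rintro rfl
      exact hvz (Finset.mem_singleton_self v)
  | succ m ih =>
    intro R hR hprops hclosed
    have hRne : R.Nonempty := Finset.card_pos.mp (by omega)
    obtain ⟨w₀, hw₀R, hw₀max⟩ := R.exists_max_image Finset.card hRne
    obtain ⟨hvw₀, hw₀cl, hw₀2⟩ := hprops w₀ hw₀R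
    have hw₀ne : w₀.Nonempty := Finset.card_pos.mp (by omega)
    have hw₀nv : w₀ ≠ {v} := by
      intro h; rw [h] at hw₀2; simp at hw₀2
    refine GraphContractible.step _
      (⟨w₀, hw₀ne, hw₀cl, hw₀nv, fun _ => hw₀R⟩ :
        {z : Finset V // z.Nonempty ∧ G.IsClique (↑z : Set V) ∧ z ≠ {v} ∧ (v ∈ z → z ∈ R)})
      ?_ ?_
    · -- unit sphere : join of D(w₀,v) with empty upper part
      refine contractible_iso (incSphereIso _ _).symm ?_
      haveI : IsEmpty {z : Finset V //
          (z.Nonempty ∧ G.IsClique (↑z : Set V) ∧ z ≠ {v} ∧ (v ∈ z → z ∈ R)) ∧ w₀ ⊂ z} := by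
        constructor
        rintro ⟨z, ⟨hne, hcl, hnv, hmem⟩, hsub⟩
        have hzR : z ∈ R := hmem (hsub.subset hvw₀)
        have h1 := hw₀max z hzR
        have h2 := Finset.card_lt_card hsub
        omega
      refine contractible_iso (joinEmptyRight _ _).symm ?_
      refine contractible_iso (incIso (fun z => ?_)) (D_contr w₀ v hvw₀ hw₀2)
      constructor
      · rintro ⟨hne, hzw₀, hnv⟩
        refine ⟨⟨hne, hw₀cl.subset (Finset.coe_subset.mpr hzw₀.subset), hnv, ?_⟩, hzw₀⟩
        intro hvz
        exact hclosed w₀ hw₀R z hzw₀.subset hvz (two_le_card_of_mem_ne hvz hnv)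
      · rintro ⟨⟨hne, hcl, hnv, hmem⟩, hzw₀⟩
        exact ⟨hne, hzw₀, hnv⟩
    · refine contractible_iso (incDeleteIso _ _).symm ?_
      refine contractible_iso (incIso (fun z => ?_)).symm
        (ih (R.erase w₀) (by rw [Finset.card_erase_of_mem hw₀R, hR]; rfl)
          (fun w hw => hprops w (Finset.mem_of_mem_erase hw)) ?_)
      · constructor
        · rintro ⟨⟨hne, hcl, hnv, hmem⟩, hzw₀⟩
          exact ⟨hne, hcl, hnv, fun h => Finset.mem_erase.mpr ⟨hzw₀, hmem h⟩⟩
        · rintro ⟨hne, hcl, hnv, hmem⟩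
          refine ⟨⟨hne, hcl, hnv, fun h => Finset.mem_of_mem_erase (hmem h)⟩, ?_⟩
          intro heq
          have : z ∈ R.erase w₀ := hmem (by rw [heq]; exact hvw₀)
          exact (Finset.ne_of_mem_erase this) heq
      · intro w hw w' hsub hv' hc'
        have hwR := Finset.mem_of_mem_erase hw
        have hw' := hclosed w hwR w' hsub hv' hc'
        refine Finset.mem_erase.mpr ⟨?_, hw'⟩
        intro heq
        have h1 := hw₀max w hwR
        have h2 : w₀ ⊆ w := heq ▸ hsub
        have : w₀ = w := Finset.eq_of_subset_of_card_le h2 (by omega)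
        exact (Finset.ne_of_mem_erase hw) this.symm

lemma refDel {V : Type} [Finite V] (G : SimpleGraph V) (v : V)
    (hD : GraphContractible (refG (G.deleteVert v))) :
    GraphContractible (incGraph fun z : Finset V =>
      (z.Nonempty ∧ G.IsClique (↑z : Set V)) ∧ z ≠ {v}) := by
  classical
  letI : Fintype V := Fintype.ofFinite V
  have base : GraphContractible
      (incGraph fun z : Finset V => z.Nonempty ∧ G.IsClique (↑z : Set V) ∧ v ∉ z) := by
    refine contractible_iso (SimpleGraph.Iso.comp (incIso (fun z => ?_))
      (refInduceIso G (fun u => u ≠ v))) hD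
    constructor
    · rintro ⟨hne, hcl, hall⟩
      exact ⟨hne, hcl, fun h => (hall v h) rfl⟩
    · rintro ⟨hne, hcl, hnv⟩
      exact ⟨hne, hcl, fun u hu h => hnv (h ▸ hu)⟩
  set R : Finset (Finset V) :=
    Finset.univ.filter (fun w : Finset V => v ∈ w ∧ G.IsClique (↑w : Set V) ∧ 2 ≤ w.card)
    with hRdef
  have hmem : ∀ w : Finset V, w ∈ R ↔ v ∈ w ∧ G.IsClique (↑w : Set V) ∧ 2 ≤ w.card := by
    intro w
    simp [hRdef]
  refine contractible_iso (incIso (fun z => ?_)) (Epeel G v base R.card R rfl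
    (fun w hw => (hmem w).mp hw)
    (fun w hw w' hsub hv' hc' => (hmem w').mpr
      ⟨hv', ((hmem w).mp hw).2.1.subset (Finset.coe_subset.mpr hsub), hc'⟩))
  constructor
  · rintro ⟨hne, hcl, hnv, _⟩
    exact ⟨⟨hne, hcl⟩, hnv⟩
  · rintro ⟨⟨hne, hcl⟩, hnv⟩
    exact ⟨hne, hcl, hnv, fun h => (hmem z).mpr ⟨h, hcl, two_le_card_of_mem_ne h hnv⟩⟩

lemma refC : ∀ (n : ℕ) {V : Type} [Finite V] (G : SimpleGraph V), Nat.card V ≤ n →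
    GraphContractible G → GraphContractible (refG G) := by
  intro n
  induction n with
  | zero =>
    intro V _ G hn h
    have hne : Nonempty V := by
      cases h with
      | single _ h1 h2 => exact h1
      | step _ v hS hD => exact ⟨v⟩
    have := Nat.card_pos (α := V)
    omega
  | succ n ih =>
    intro V _ G hn h
    classical
    letI : Fintype V := Fintype.ofFinite V
    cases h with
    | single _ h1 h2 =>
      obtain ⟨v⟩ := h1
      have hmem : ∀ (s : Finset V), s.Nonempty → ∀ u : V, u ∈ s := by
        intro s hs u
        obtain ⟨c, hc⟩ := hs
        rwa [Subsingleton.elim u c]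
      refine .single _ ⟨⟨{v}, Finset.singleton_nonempty v, singleton_clique G v⟩⟩ ?_
      constructor
      rintro ⟨z, hz1, hz2⟩ ⟨z', hz1', hz2'⟩
      apply Subtype.ext
      ext u
      exact iff_of_true (hmem z hz1 u) (hmem z' hz1' u)
    | step _ v hS hD =>
      refine .step _ ⟨{v}, Finset.singleton_nonempty v, singleton_clique G v⟩ ?_ ?_
      · -- unit sphere of the refinement at {v}
        refine contractible_iso (incSphereIso _ _).symm ?_
        haveI : IsEmpty {z : Finset V //
            (z.Nonempty ∧ G.IsClique (↑z : Set V)) ∧ z ⊂ ({v} : Finset V)} := by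
          constructor
          rintro ⟨z, ⟨hne, _⟩, hsub⟩
          rw [Finset.ssubset_singleton_iff] at hsub
          subst hsub
          exact Finset.not_nonempty_empty hne
        refine contractible_iso (joinEmptyLeft _ _).symm ?_
        refine contractible_iso (aboveIso G {v} (singleton_clique G v)).symm ?_
        refine contractible_iso (refInduceIso G (fun u => ∀ a ∈ ({v} : Finset V), G.Adj a u)) ?_
        -- contractible (refG (linkG G {v}))
        have elink : G.unitSphere v ≃g linkG G ({v} : Finset V) :=
          { toEquiv := Equiv.subtypeEquivRight (fun u => by simp)
            map_rel_iff' := Iff.rfl }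
        refine ih (linkG G ({v} : Finset V)) ?_ (contractible_iso elink hS)
        have hlt : Nat.card {u : V // ∀ a ∈ ({v} : Finset V), G.Adj a u} < Nat.card V :=
          natcard_lt (x := v) (by simp [G.irrefl])
        omega
      · refine contractible_iso (incDeleteIso _ _).symm ?_
        refine refDel G v (ih (G.deleteVert v) ?_ hD)
        have hlt : Nat.card {u : V // u ≠ v} < Nat.card V := natcard_lt (x := v) (by simp)
        omega

/-- Core computation: the unit sphere of the barycentric refinement at a clique `x`
is a `(q-1)`-sphere, given that refinements of strictly smaller sphere graphs are
spheres. -/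
lemma refAt {V : Type} [Finite V] (G : SimpleGraph V) (q : ℤ) (hman : IsGraphManifold q G)
    (hrec : ∀ {W : Type} [Finite W] (K : SimpleGraph W), Nat.card W < Nat.card V →
      ∀ r : ℤ, GraphSphere r K → GraphSphere r (refG K))
    (xh : {z : Finset V // z.Nonempty ∧ G.IsClique (↑z : Set V)}) :
    GraphSphere (q - 1) ((refG G).unitSphere xh) := by
  classical
  letI : Fintype V := Fintype.ofFinite V
  obtain ⟨x, hxne, hxcl⟩ := xh
  refine sphere_iso (incSphereIso _ ⟨x, hxne, hxcl⟩).symm ?_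
  have hlow : GraphSphere ((x.card : ℤ) - 2)
      (incGraph fun z : Finset V => (z.Nonempty ∧ G.IsClique (↑z : Set V)) ∧ z ⊂ x) := by
    refine sphere_iso (incIso (fun z => ?_)) (bd_sphere x.card x rfl (Finset.card_pos.mpr hxne))
    constructor
    · rintro ⟨hne, hsub⟩
      exact ⟨⟨hne, hxcl.subset (Finset.coe_subset.mpr hsub.subset)⟩, hsub⟩
    · rintro ⟨⟨hne, _⟩, hsub⟩
      exact ⟨hne, hsub⟩
  have hup : GraphSphere (q - (x.card : ℤ))
      (incGraph fun z : Finset V => (z.Nonempty ∧ G.IsClique (↑z : Set V)) ∧ x ⊂ z) := by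
    have hlink : GraphSphere (q - (x.card : ℤ)) (linkG G x) :=
      link_sphere x.card G q hman x hxcl rfl (Finset.card_pos.mpr hxne)
    obtain ⟨a, hax⟩ := hxne
    have hlt : Nat.card {u : V // ∀ b ∈ x, G.Adj b u} < Nat.card V :=
      natcard_lt (x := a) (fun h => G.irrefl (h a hax))
    have := hrec (linkG G x) hlt _ hlink
    refine sphere_iso (aboveIso G x hxcl).symm (sphere_iso (refInduceIso G _) this)
  have hj := join_sphere (Nat.card _ + Nat.card _) _ _ _ _ le_rfl hlow hup
  have hdim : ((x.card : ℤ) - 2) + (q - (x.card : ℤ)) + 1 = q - 1 := by ring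
  rwa [hdim] at hj

lemma refSphere : ∀ (n : ℕ) {V : Type} [Finite V] (G : SimpleGraph V), Nat.card V ≤ n →
    ∀ q : ℤ, GraphSphere q G → GraphSphere q (refG G) := by
  intro n
  induction n with
  | zero =>
    intro V _ G hn q h
    cases h with
    | empty _ he =>
      refine .empty _ ?_
      constructor
      rintro ⟨z, hz, -⟩
      obtain ⟨c, -⟩ := hz
      exact isEmptyElim c
    | succ _ q hq hS hv =>
      obtain ⟨v, -⟩ := hv
      haveI : Nonempty V := ⟨v⟩
      have := Nat.card_pos (α := V)
      omega
  | succ n ih =>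
    intro V _ G hn q h
    classical
    letI : Fintype V := Fintype.ofFinite V
    cases h with
    | empty _ he =>
      refine .empty _ ?_
      constructor
      rintro ⟨z, hz, -⟩
      obtain ⟨c, -⟩ := hz
      exact isEmptyElim c
    | succ _ q hq hS hv =>
      refine .succ _ _ hq ?_ ?_
      · intro xh
        refine refAt G q (fun u => hS u) ?_ xh
        intro W _ K hcard r hK
        exact ih K (by omega) r hK
      · obtain ⟨v, hD⟩ := hv
        refine ⟨⟨{v}, Finset.singleton_nonempty v, singleton_clique G v⟩, ?_⟩
        refine contractible_iso (incDeleteIso _ _).symm ?_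
        refine refDel G v ?_
        refine refC (Nat.card {u : V // u ≠ v}) (G.deleteVert v) le_rfl hD

lemma refManifold {V : Type} [Finite V] (G : SimpleGraph V) (q : ℤ)
    (hman : IsGraphManifold q G) : IsGraphManifold q (refG G) := by
  intro xh
  refine refAt G q hman ?_ xh
  intro W _ K _ r hK
  exact refSphere (Nat.card W) K le_rfl r hK

end Master

/-- The Barycentric refinement of a `q`-manifold — the graph whose vertices are the
nonempty cliques of `G`, two cliques being adjacent iff one is strictly contained in
the other — is again a `q`-manifold. -/
theorem barycentric_refinement_manifold {V : Type} [Fintype V] (G : SimpleGraph V)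
    (q : ℕ) (hG : IsGraphManifold (q : ℤ) G) :
    IsGraphManifold (q : ℤ)
      (SimpleGraph.fromRel
        (fun x y : {x : Finset V // x.Nonempty ∧ G.IsClique (↑x : Set V)} =>
          x.1 ⊂ y.1)) := by
  classical
  have key : ∀ (a b : {z : Finset V // z.Nonempty ∧ G.IsClique (↑z : Set V)}),
      (SimpleGraph.fromRel
        (fun x y : {x : Finset V // x.Nonempty ∧ G.IsClique (↑x : Set V)} =>
          x.1 ⊂ y.1)).Adj a b ↔ (refG G).Adj a b := by
    intro a b
    rw [SimpleGraph.fromRel_adj]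
    constructor
    · rintro ⟨hne, h⟩
      exact h
    · intro h
      refine ⟨?_, h⟩
      rcases h with h | h
      · exact fun he => h.ne (congrArg Subtype.val he)
      · exact fun he => h.ne (congrArg Subtype.val he.symm)
  intro v
  refine sphere_iso ?_ (refManifold G (q : ℤ) hG v)
  exact { toEquiv := Equiv.subtypeEquivRight (fun u => (key v u).symm)
          map_rel_iff' := fun {a b} => key a.1 b.1 }
end

section
/- In dimension 1 the limiting density of states is the arcsine distribution on [0,4]: for every x ∈ [0,4], the fraction of eigenvalues of the Kirchhoff Laplacian of the cycle graph C_n that are at most x, namely (1/n) · card{k ∈ {0,…,n−1} : 2 − 2·cos(2πk/n) ≤ x}, converges to (2/π) · arcsin(√x / 2) as n → ∞. (The eigenvalues of the Kirchhoff Laplacian of C_n are exactly 2 − 2·cos(2πk/n) for k = 0, …, n−1.) -/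
open Filter Real Finset
set_option maxHeartbeats 1000000

private lemma cos2L (x : ℝ) (hx0 : 0 ≤ x) (hx4 : x ≤ 4) :
    Real.cos (2 * Real.arcsin (Real.sqrt x / 2)) = 1 - x / 2 := by
  have hs : Real.sqrt x / 2 ≤ 1 := by
    have : Real.sqrt x ≤ 2 := by
      rw [show (2:ℝ) = Real.sqrt 4 by
        rw [show (4:ℝ) = 2^2 by norm_num, Real.sqrt_sq (by norm_num)]]
      exact Real.sqrt_le_sqrt hx4
    linarith
  have hs' : (-1:ℝ) ≤ Real.sqrt x / 2 := by linarith [Real.sqrt_nonneg x]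
  have hsq : Real.sqrt x ^ 2 = x := Real.sq_sqrt hx0
  have hc : Real.cos (Real.arcsin (Real.sqrt x / 2)) ^ 2 = 1 - x/4 := by
    rw [Real.cos_arcsin, Real.sq_sqrt]
    · nlinarith
    · nlinarith
  rw [Real.cos_two_mul, hc]
  ring

/-- The limiting density of states in dimension one is the arcsine distribution on
`[0,4]`: the fraction of eigenvalues `2 - 2 cos (2πk/n)`, `k = 0, …, n-1`, of the
Kirchhoff Laplacian of the cycle graph `Cₙ` that are at most `x` converges to
`(2/π) arcsin (√x / 2)`. -/
theorem cycle_density_of_states_arcsin :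
    ∀ x ∈ Set.Icc (0 : ℝ) 4,
      Tendsto (fun n : ℕ =>
          (((Finset.range n).filter
            (fun k : ℕ => 2 - 2 * Real.cos (2 * Real.pi * (k : ℝ) / (n : ℝ)) ≤ x)).card : ℝ) / n)
        atTop (nhds (2 / Real.pi * Real.arcsin (Real.sqrt x / 2))) := by
  rintro x ⟨hx0, hx4⟩
  have hπ : (0:ℝ) < Real.pi := Real.pi_pos
  rcases eq_or_lt_of_le hx4 with h4 | hx4
  · -- x = 4 : every eigenvalue qualifies
    subst h4
    have hsqrt : Real.sqrt 4 = 2 := by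
      rw [show (4:ℝ) = 2^2 by norm_num, Real.sqrt_sq (by norm_num)]
    have hval : 2 / Real.pi * Real.arcsin (Real.sqrt 4 / 2) = 1 := by
      rw [hsqrt]
      norm_num [Real.arcsin_one]
    rw [hval]
    apply tendsto_const_nhds.congr'
    filter_upwards [eventually_ge_atTop 1] with n hn
    have hfilter : ((Finset.range n).filter
        (fun k : ℕ => 2 - 2 * Real.cos (2 * Real.pi * (k : ℝ) / (n : ℝ)) ≤ 4)) =
        Finset.range n := by
      apply Finset.filter_true_of_mem
      intro k _
      have := Real.neg_one_le_cos (2 * Real.pi * (k : ℝ) / (n : ℝ))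
      linarith
    have hne : ((n:ℝ)) ≠ 0 := Nat.cast_ne_zero.mpr (by omega)
    rw [hfilter, Finset.card_range, div_self hne]
  · -- x < 4
    set L := Real.arcsin (Real.sqrt x / 2) with hLdef
    set t := L / Real.pi with htdef
    have hL0 : 0 ≤ L := Real.arcsin_nonneg.mpr (by positivity)
    have hLlt : L < Real.pi / 2 := by
      apply Real.arcsin_lt_pi_div_two.mpr
      have : Real.sqrt x < 2 := by
        rw [show (2:ℝ) = Real.sqrt 4 by
          rw [show (4:ℝ) = 2^2 by norm_num, Real.sqrt_sq (by norm_num)]]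
        exact Real.sqrt_lt_sqrt hx0 hx4
      linarith
    have hts : t * Real.pi = L := div_mul_cancel₀ L hπ.ne'
    have ht0 : 0 ≤ t := div_nonneg hL0 hπ.le
    have htlt : t < 1/2 := by
      rw [htdef, div_lt_iff₀ hπ]
      linarith
    have hcos2L : Real.cos (2 * L) = 1 - x / 2 := cos2L x hx0 hx4.le
    -- the eigenvalue condition in terms of k
    have key : ∀ n : ℕ, 1 ≤ n → ∀ k ∈ Finset.range n,
        (2 - 2 * Real.cos (2 * Real.pi * (k : ℝ) / (n : ℝ)) ≤ x ↔
          (k ≤ ⌊(n:ℝ) * t⌋₊ ∨ ⌈(n:ℝ) * (1 - t)⌉₊ ≤ k)) := by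
      intro n hn k hk
      rw [Finset.mem_range] at hk
      have hnpos : (0:ℝ) < n := by exact_mod_cast hn
      have hkn : (k:ℝ) < n := by exact_mod_cast hk
      have hk0 : (0:ℝ) ≤ k := Nat.cast_nonneg k
      have hcond : (2 - 2 * Real.cos (2 * Real.pi * (k : ℝ) / (n : ℝ)) ≤ x ↔
          Real.cos (2*L) ≤ Real.cos (2 * Real.pi * (k : ℝ) / (n : ℝ))) := by
        rw [hcos2L]; constructor <;> intro h <;> linarith
      rw [hcond]
      have h2L : 2 * L ∈ Set.Icc (0:ℝ) Real.pi := ⟨by linarith, by linarith⟩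
      have hfloor_le : (⌊(n:ℝ) * t⌋₊ : ℝ) ≤ (n:ℝ) * t :=
        Nat.floor_le (by positivity)
      have hceil_ge : (n:ℝ) * (1 - t) ≤ (⌈(n:ℝ) * (1 - t)⌉₊ : ℝ) :=
        Nat.le_ceil _
      rcases le_or_gt (2*k) n with hcase | hcase
      · -- k/n ≤ 1/2
        have hcase' : (2:ℝ) * k ≤ n := by exact_mod_cast hcase
        have hα : 2 * Real.pi * (k : ℝ) / (n : ℝ) ∈ Set.Icc (0:ℝ) Real.pi := by
          constructor
          · positivity
          · rw [div_le_iff₀ hnpos]; nlinarith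
        rw [Real.strictAntiOn_cos.le_iff_ge h2L hα]
        have hiff1 : 2 * Real.pi * (k : ℝ) / (n : ℝ) ≤ 2 * L ↔ (k:ℝ) ≤ (n:ℝ) * t := by
          rw [div_le_iff₀ hnpos]
          constructor <;> intro h <;> nlinarith [hts, hπ]
        have hiff2 : ((k:ℝ) ≤ (n:ℝ) * t) ↔ k ≤ ⌊(n:ℝ) * t⌋₊ := by
          rw [Nat.le_floor_iff (by positivity)]
        have hkb : k < ⌈(n:ℝ) * (1 - t)⌉₊ := by
          have h1 : (k:ℝ) < (n:ℝ) * (1 - t) := by nlinarith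
          have h2 : (k:ℝ) < (⌈(n:ℝ) * (1 - t)⌉₊ : ℝ) := lt_of_lt_of_le h1 hceil_ge
          exact_mod_cast h2
        rw [hiff1, hiff2]
        constructor
        · exact Or.inl
        · rintro (h | h)
          · exact h
          · omega
      · -- k/n > 1/2
        have hcase' : (n:ℝ) < 2 * k := by exact_mod_cast hcase
        have hβmem : 2 * Real.pi - 2 * Real.pi * (k : ℝ) / (n : ℝ) ∈ Set.Icc (0:ℝ) Real.pi := by
          constructor
          · have : 2 * Real.pi * (k : ℝ) / (n : ℝ) ≤ 2 * Real.pi := by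
              rw [div_le_iff₀ hnpos]; nlinarith
            linarith
          · have h1 : Real.pi ≤ 2 * Real.pi * (k : ℝ) / (n : ℝ) := by
              rw [le_div_iff₀ hnpos]; nlinarith
            linarith
        rw [show Real.cos (2 * Real.pi * (k : ℝ) / (n : ℝ)) =
            Real.cos (2 * Real.pi - (2 * Real.pi - 2 * Real.pi * (k : ℝ) / (n : ℝ))) by ring_nf,
          Real.cos_two_pi_sub]
        rw [Real.strictAntiOn_cos.le_iff_ge h2L hβmem]
        have hiff1 : 2 * Real.pi - 2 * Real.pi * (k : ℝ) / (n : ℝ) ≤ 2 * L ↔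
            (n:ℝ) * (1 - t) ≤ (k:ℝ) := by
          rw [sub_le_iff_le_add, ← sub_le_iff_le_add', le_div_iff₀ hnpos]
          constructor <;> intro h <;> nlinarith [hts, hπ]
        have hiff2 : ((n:ℝ) * (1 - t) ≤ (k:ℝ)) ↔ ⌈(n:ℝ) * (1 - t)⌉₊ ≤ k := by
          rw [Nat.ceil_le]
        have hka : ¬ (k ≤ ⌊(n:ℝ) * t⌋₊) := by
          intro hle
          have h1 : (k:ℝ) ≤ (⌊(n:ℝ) * t⌋₊ : ℝ) := by exact_mod_cast hle
          nlinarith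
        rw [hiff1, hiff2]
        constructor
        · exact Or.inr
        · rintro (h | h)
          · exact absurd h hka
          · exact h
    -- counting
    have hcard : ∀ n : ℕ, 1 ≤ n →
        (((Finset.range n).filter
          (fun k : ℕ => 2 - 2 * Real.cos (2 * Real.pi * (k : ℝ) / (n : ℝ)) ≤ x)).card
          = ⌊(n:ℝ) * t⌋₊ + 1 + (n - ⌈(n:ℝ) * (1 - t)⌉₊)) := by
      intro n hn
      classical
      have hnpos : (0:ℝ) < n := by exact_mod_cast hn
      set a := ⌊(n:ℝ) * t⌋₊ with ha
      set b := ⌈(n:ℝ) * (1 - t)⌉₊ with hb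
      have hfloor_le : (a : ℝ) ≤ (n:ℝ) * t := Nat.floor_le (by positivity)
      have hceil_ge : (n:ℝ) * (1 - t) ≤ (b : ℝ) := Nat.le_ceil _
      have hab : a < b := by
        have : (a:ℝ) < (b:ℝ) := by nlinarith
        exact_mod_cast this
      have han : a < n := by
        have : (a:ℝ) < (n:ℝ) := by nlinarith
        exact_mod_cast this
      rw [Finset.filter_congr (key n hn)]
      have hset : (Finset.range n).filter (fun k : ℕ => k ≤ a ∨ b ≤ k)
          = Finset.range (a+1) ∪ Finset.Ico b n := by
        ext k
        simp only [Finset.mem_filter, Finset.mem_range, Finset.mem_union, Finset.mem_Ico]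
        omega
      rw [hset, Finset.card_union_of_disjoint, Finset.card_range, Nat.card_Ico]
      rw [Finset.disjoint_left]
      intro k hk1 hk2
      simp only [Finset.mem_range] at hk1
      simp only [Finset.mem_Ico] at hk2
      omega
    -- squeeze
    have hlim : 2 / Real.pi * L = 2 * t := by
      rw [htdef]; ring
    rw [hlim]
    apply tendsto_of_tendsto_of_tendsto_of_le_of_le'
      (g := fun n : ℕ => 2 * t - 1 / n) (h := fun n : ℕ => 2 * t + 1 / n)
    · simpa using (tendsto_const_nhds : Tendsto (fun _ : ℕ => 2 * t) atTop (nhds (2 * t))).sub tendsto_one_div_atTop_nhds_zero_nat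
    · simpa using (tendsto_const_nhds : Tendsto (fun _ : ℕ => 2 * t) atTop (nhds (2 * t))).add tendsto_one_div_atTop_nhds_zero_nat
    · filter_upwards [eventually_ge_atTop 1] with n hn
      have hnpos : (0:ℝ) < n := by exact_mod_cast hn
      rw [hcard n hn]
      set a := ⌊(n:ℝ) * t⌋₊ with ha
      set b := ⌈(n:ℝ) * (1 - t)⌉₊ with hb
      have hceil_lt : (b : ℝ) < (n:ℝ) * (1 - t) + 1 := Nat.ceil_lt_add_one (by nlinarith)
      have hfloor_gt : (n:ℝ) * t < (a:ℝ) + 1 := Nat.lt_floor_add_one _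
      have hbn : b ≤ n := by
        rw [hb, Nat.ceil_le]; nlinarith
      rw [sub_le_iff_le_add, ← add_div, le_div_iff₀ hnpos]
      push_cast [Nat.cast_sub hbn]
      nlinarith
    · filter_upwards [eventually_ge_atTop 1] with n hn
      have hnpos : (0:ℝ) < n := by exact_mod_cast hn
      rw [hcard n hn]
      set a := ⌊(n:ℝ) * t⌋₊ with ha
      set b := ⌈(n:ℝ) * (1 - t)⌉₊ with hb
      have hceil_ge : (n:ℝ) * (1 - t) ≤ (b : ℝ) := Nat.le_ceil _
      have hfloor_le : (a : ℝ) ≤ (n:ℝ) * t := Nat.floor_le (by positivity)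
      have hbn : b ≤ n := by
        rw [hb, Nat.ceil_le]; nlinarith
      rw [div_le_iff₀ hnpos]
      push_cast [Nat.cast_sub hbn]
      have hinv : (1/(n:ℝ)) * n = 1 := by field_simp
      nlinarith [hinv]
end
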